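/- For an odd prime p, a finite field k satisfies u^p = 1 for all nonzero u if and only if k ≅ F_2, or p is a Mersenne prime (p = 2^m − 1 for some m) and k ≅ F_{p+1}. -/

import Mathlib

/-- For an odd prime `p`, a finite field `k` satisfies `u^p = 1` for all units iff
`k ≅ F₂`, or `p` is a Mersenne prime and `k ≅ F_{p+1}`. -/
theorem finite_field_delta_p_iff (p : ℕ) (hp : p.Prime) (hodd : Odd p)
    (k : Type) [Field k] [Fintype k] :
    (∀ u : kˣ, u ^ p = 1) ↔
      Fintype.card k = 2 ∨ ((∃ m : ℕ, p = 2 ^ m - 1) ∧ Fintype.card k = p + 1) := by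
  letI : DecidableEq k := Classical.decEq k
  constructor
  · intro h
    obtain ⟨g, hg⟩ := IsCyclic.exists_generator (α := kˣ)
    have hcard : Nat.card kˣ = Fintype.card k - 1 := by
      rw [Nat.card_units, Nat.card_eq_fintype_card]
    have hord : orderOf g = Nat.card kˣ := orderOf_eq_card_of_forall_mem_zpowers hg
    have hdvd : Nat.card kˣ ∣ p := by
      rw [← hord]; exact orderOf_dvd_of_pow_eq_one (h g)
    have h2 : 2 ≤ Fintype.card k := Fintype.one_lt_card
    rcases hp.eq_one_or_self_of_dvd _ hdvd with h1 | h1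
    · left; omega
    · right
      have hk : Fintype.card k = p + 1 := by omega
      refine ⟨?_, hk⟩
      obtain ⟨ch, _, n, hch, hcard'⟩ := FiniteField.card' k
      have heven : 2 ∣ ch ^ (n : ℕ) := by
        rw [← hcard', hk]
        obtain ⟨j, hj⟩ := hodd
        omega
      have hch2 : ch = 2 := by
        have h2ch : 2 ∣ ch := Nat.Prime.dvd_of_dvd_pow Nat.prime_two heven
        exact ((Nat.prime_dvd_prime_iff_eq Nat.prime_two hch).mp h2ch).symm
      exact ⟨n, by rw [← hch2, ← hcard', hk]; omega⟩
  · rintro (h2 | ⟨_, hk⟩) u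
    · have hc1 : Nat.card kˣ = 1 := by
        rw [Nat.card_units, Nat.card_eq_fintype_card]; omega
      have hu : u = 1 := by
        haveI := (Nat.card_eq_one_iff_unique.mp hc1).1
        exact Subsingleton.elim u 1
      simp [hu]
    · have hc : Nat.card kˣ = p := by
        rw [Nat.card_units, Nat.card_eq_fintype_card, hk]; omega
      calc u ^ p = u ^ Nat.card kˣ := by rw [hc]
        _ = 1 := pow_card_eq_one'
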